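/- Let G be a finite simple graph on vertex set A ⊔ B with |A| = k, |B| = n, and biadjacency matrix G_AB ∈ F_2^{k×n} of rank k over F_2. Let p ∈ [0,1], let ρ_p be the graph state of G after uniform dephasing with parameter p on every qubit, and let ρ_B := Tr_A(ρ_p). Let C ⊆ F_2^n be the row space of G_AB and let q be the distribution on the coset space F_2^n/C given by q(c) = Σ_{e ∈ c} p^{n − wt(e)} (1−p)^{wt(e)}, where wt is the Hamming weight. Then Ŝ(ρ_B) = k + S(q). -/

import Mathlib

open Finset Matrix

/-- The field with two elements. -/
abbrev F2 : Type := ZMod 2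

/-- Hamming weight of a bit string. -/
def hamW {ι : Type*} [Fintype ι] (x : ι → F2) : ℕ :=
  (Finset.univ.filter fun i => x i ≠ 0).card

/-- Hamming distance between bit strings. -/
def hamD {ι : Type*} [Fintype ι] (x y : ι → F2) : ℕ :=
  (Finset.univ.filter fun i => x i ≠ y i).card

/-- `(-1)^c` for `c ∈ F_2`. -/
noncomputable def chr (c : F2) : ℂ := (-1 : ℂ) ^ c.val

/-- `q(x) = Σ_{{u,v} ∈ E} x_u x_v (mod 2)`. -/
def qform {V : Type*} [Fintype V] [DecidableEq V] (G : SimpleGraph V) [DecidableRel G.Adj]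
    (x : V → F2) : F2 :=
  ∑ e ∈ G.edgeFinset, Sym2.lift ⟨fun u v => x u * x v, fun u v => mul_comm _ _⟩ e

/-- The graph state of `G` after uniform dephasing with parameter `p` on every qubit:
entries `2^{-m} (-1)^{q(x)+q(y)} (2p-1)^{d(x,y)}`. -/
noncomputable def graphDeph {V : Type*} [Fintype V] [DecidableEq V] (G : SimpleGraph V)
    [DecidableRel G.Adj] (p : ℝ) : Matrix (V → F2) (V → F2) ℂ :=
  Matrix.of fun x y =>
    ((2 : ℂ) ^ Fintype.card V)⁻¹ * chr (qform G x + qform G y) *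
      ((2 * p - 1 : ℝ) : ℂ) ^ hamD x y

/-- Binary entropy `S̄(p)`, base 2. -/
noncomputable def binEnt (p : ℝ) : ℝ := -(p * Real.logb 2 p) - (1 - p) * Real.logb 2 (1 - p)

/-- Partial trace over the `A` qubits for matrices indexed by bit strings on `A ⊔ B`. -/
noncomputable def ptrSum (k n : ℕ)
    (M : Matrix ((Fin k ⊕ Fin n) → F2) ((Fin k ⊕ Fin n) → F2) ℂ) :
    Matrix (Fin n → F2) (Fin n → F2) ℂ :=
  Matrix.of fun t t' => ∑ s : Fin k → F2, M (Sum.elim s t) (Sum.elim s t')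

/-- Shannon entropy (base 2) of a (finitely supported) real vector, with `0·log₂ 0 = 0`. -/
noncomputable def shannonEnt {ι : Sort*} (q : ι → ℝ) : ℝ := -∑ᶠ i, q i * Real.logb 2 (q i)

/-- von Neumann entropy (base 2): the Shannon entropy of the eigenvalue vector. -/
noncomputable def vnEnt {n : Type*} [Fintype n] [DecidableEq n] {ρ : Matrix n n ℂ}
    (h : ρ.IsHermitian) : ℝ :=
  -∑ i, h.eigenvalues i * Real.logb 2 (h.eigenvalues i)

/-- The distribution induced on the coset space `M ⧸ K` by a weight `w` on `M`:
`c ↦ Σ_{v ∈ c} w(v)`. -/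
noncomputable def synd {M : Type*} [AddCommGroup M] [Module F2 M] (K : Submodule F2 M)
    (w : M → ℝ) (c : M ⧸ K) : ℝ :=
  ∑ᶠ v ∈ {v : M | (Submodule.Quotient.mk v : M ⧸ K) = c}, w v

noncomputable def chrR (c : F2) : ℝ := (-1 : ℝ) ^ c.val

lemma F2_cases (a : F2) : a = 0 ∨ a = 1 := by revert a; decide

lemma chrR_zero : chrR 0 = 1 := by norm_num [chrR]
lemma chrR_one : chrR 1 = -1 := by
  have : (1 : F2).val = 1 := rfl
  simp [chrR, this]

lemma chrR_add (a b : F2) : chrR (a + b) = chrR a * chrR b := by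
  rcases F2_cases a with ha | ha <;> rcases F2_cases b with hb | hb <;> subst ha <;> subst hb
  · rw [add_zero, chrR_zero]; ring
  · rw [zero_add, chrR_zero]; ring
  · rw [add_zero, chrR_zero]; ring
  · rw [show (1 + 1 : F2) = 0 by decide, chrR_zero, chrR_one]; ring

lemma chrR_mul_self (a : F2) : chrR a * chrR a = 1 := by
  rcases F2_cases a with ha | ha <;> subst ha
  · rw [chrR_zero]; ring
  · rw [chrR_one]; ring

lemma chrR_sum {ι : Type*} (s : Finset ι) (f : ι → F2) :
    chrR (∑ i ∈ s, f i) = ∏ i ∈ s, chrR (f i) := by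
  classical
  induction s using Finset.induction with
  | empty => simp [chrR_zero]
  | @insert a s hx ih => rw [Finset.sum_insert hx, Finset.prod_insert hx, chrR_add, ih]

lemma sum_F2 {M : Type*} [AddCommMonoid M] (f : F2 → M) : ∑ c : F2, f c = f 0 + f 1 := by
  rw [show (univ : Finset F2) = {0, 1} by decide, Finset.sum_insert (by decide),
    Finset.sum_singleton]

lemma chrR_dot_sum {ι : Type*} [Fintype ι] [DecidableEq ι] (w : ι → F2) :
    ∑ s : ι → F2, chrR (s ⬝ᵥ w) = if w = 0 then (2 : ℝ) ^ Fintype.card ι else 0 := by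
  classical
  calc ∑ s : ι → F2, chrR (s ⬝ᵥ w) = ∑ s : ι → F2, ∏ i, chrR (s i * w i) := by
        refine Finset.sum_congr rfl fun s _ => ?_
        exact chrR_sum univ fun i => s i * w i
    _ = ∏ i, ∑ c : F2, chrR (c * w i) := by
        rw [Finset.prod_univ_sum, Fintype.piFinset_univ]
    _ = if w = 0 then (2 : ℝ) ^ Fintype.card ι else 0 := by
        have key : ∀ i, (∑ c : F2, chrR (c * w i)) = if w i = 0 then 2 else 0 := by
          intro i
          rw [sum_F2]
          rcases F2_cases (w i) with h | h <;> rw [h]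
          · rw [mul_zero, mul_zero, chrR_zero]; norm_num
          · rw [zero_mul, one_mul, chrR_zero, chrR_one]; norm_num
        simp_rw [key]
        by_cases hw : w = 0
        · subst hw
          simp [Finset.prod_const, Finset.card_univ]
        · obtain ⟨i, hi⟩ : ∃ i, w i ≠ 0 := by
            by_contra h; push_neg at h; exact hw (funext h)
          rw [if_neg hw]
          exact Finset.prod_eq_zero (Finset.mem_univ i) (by simp [hi])


lemma F2_add_self (a : F2) : a + a = 0 := by
  have : ∀ a : F2, a + a = 0 := by decide
  exact this a

lemma F2_abab (a b : F2) : a * b + a * b + (a * b + a * b) = 0 := by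
  have : ∀ x : F2, x + x + (x + x) = 0 := by decide
  exact this _

/-- the mixed-edge symmetric term -/
def mixTerm {k n : ℕ} (s : Fin k → F2) (w : Fin n → F2) :
    (Fin k ⊕ Fin n) → (Fin k ⊕ Fin n) → F2
  | Sum.inl u, Sum.inr v => s u * w v
  | Sum.inr v, Sum.inl u => s u * w v
  | _, _ => 0

lemma mixTerm_comm {k n : ℕ} (s : Fin k → F2) (w : Fin n → F2)
    (a b : Fin k ⊕ Fin n) : mixTerm s w a b = mixTerm s w b a := by
  cases a <;> cases b <;> rfl

lemma qform_split {k n : ℕ} (G : SimpleGraph (Fin k ⊕ Fin n)) [DecidableRel G.Adj]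
    (GAB : Matrix (Fin k) (Fin n) F2)
    (hGAB : ∀ u v, GAB u v = if G.Adj (Sum.inl u) (Sum.inr v) then 1 else 0)
    (s : Fin k → F2) (t t' : Fin n → F2) :
    qform G (Sum.elim s t) + qform G (Sum.elim s t') =
      s ⬝ᵥ (GAB *ᵥ (t + t')) + (qform G (Sum.elim 0 t) + qform G (Sum.elim 0 t')) := by
  classical
  set w : Fin n → F2 := t + t' with hw
  have key : qform G (Sum.elim s t) + qform G (Sum.elim s t') +
      (qform G (Sum.elim 0 t) + qform G (Sum.elim 0 t')) = s ⬝ᵥ (GAB *ᵥ w) := by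
    have hsum : qform G (Sum.elim s t) + qform G (Sum.elim s t') +
        (qform G (Sum.elim 0 t) + qform G (Sum.elim 0 t')) =
        ∑ e ∈ G.edgeFinset,
          Sym2.lift ⟨fun a b => mixTerm s w a b, fun a b => mixTerm_comm s w a b⟩ e := by
      unfold qform
      rw [← Finset.sum_add_distrib, ← Finset.sum_add_distrib, ← Finset.sum_add_distrib]
      refine Finset.sum_congr rfl fun e _ => ?_
      induction e using Sym2.ind with
      | _ a b =>
        simp only [Sym2.lift_mk]
        cases a with
        | inl u =>
          cases b with
          | inl u' =>
            simp only [Sum.elim_inl, mixTerm, Pi.zero_apply, zero_mul, add_zero]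
            exact F2_add_self _
          | inr v =>
            show s u * t v + s u * t' v + (0 * t v + 0 * t' v) = s u * w v
            rw [hw]; simp only [Pi.add_apply]; ring
        | inr v =>
          cases b with
          | inl u =>
            show t v * s u + t' v * s u + (t v * 0 + t' v * 0) = s u * w v
            rw [hw]; simp only [Pi.add_apply]; ring
          | inr v' =>
            show t v * t v' + t' v * t' v' + (t v * t v' + t' v * t' v') = mixTerm s w _ _
            show _ = (0 : F2)
            have : ∀ x y : F2, x + y + (x + y) = 0 := by decide
            exact this _ _
    rw [hsum]
    -- now sum over edges of the mixed term equals the bilinear form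
    set ψ : Sym2 (Fin k ⊕ Fin n) → F2 :=
      fun e => Sym2.lift ⟨fun a b => mixTerm s w a b, fun a b => mixTerm_comm s w a b⟩ e with hψ
    have hRHS : s ⬝ᵥ (GAB *ᵥ w) =
        ∑ p ∈ (univ ×ˢ univ : Finset (Fin k × Fin n)).filter
            (fun p => G.Adj (Sum.inl p.1) (Sum.inr p.2)), s p.1 * w p.2 := by
      rw [Finset.sum_filter, Finset.sum_product]
      simp only [dotProduct, Matrix.mulVec, Finset.mul_sum]
      refine Finset.sum_congr rfl fun u _ => Finset.sum_congr rfl fun v _ => ?_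
      rw [hGAB u v]
      by_cases h : G.Adj (Sum.inl u) (Sum.inr v) <;> simp [h]
    rw [hRHS]
    set P := (univ ×ˢ univ : Finset (Fin k × Fin n)).filter
        (fun p => G.Adj (Sum.inl p.1) (Sum.inr p.2)) with hP
    have himg : Finset.image (fun p : Fin k × Fin n => s(Sum.inl p.1, Sum.inr p.2)) P ⊆
        G.edgeFinset := by
      intro e he
      rw [Finset.mem_image] at he
      obtain ⟨p, hp, rfl⟩ := he
      rw [SimpleGraph.mem_edgeFinset, SimpleGraph.mem_edgeSet]
      exact (Finset.mem_filter.1 hp).2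
    rw [← Finset.sum_subset himg]
    · rw [Finset.sum_image]
      · rfl
      · intro p hp q hq hpq
        rw [Sym2.eq_iff] at hpq
        rcases hpq with ⟨h1, h2⟩ | ⟨h1, h2⟩
        · exact Prod.ext (Sum.inl_injective h1) (Sum.inr_injective h2)
        · exact absurd h1 (by simp)
    · intro e he hne
      induction e using Sym2.ind with
      | _ a b =>
        cases a with
        | inl u =>
          cases b with
          | inl u' => rfl
          | inr v =>
            exfalso
            apply hne
            rw [Finset.mem_image]
            refine ⟨(u, v), ?_, rfl⟩
            rw [hP, Finset.mem_filter]
            exact ⟨Finset.mem_product.2 ⟨Finset.mem_univ _, Finset.mem_univ _⟩,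
              (SimpleGraph.mem_edgeSet G).1 (SimpleGraph.mem_edgeFinset.1 he)⟩
        | inr v =>
          cases b with
          | inr v' => rfl
          | inl u =>
            exfalso
            apply hne
            rw [Finset.mem_image]
            refine ⟨(u, v), ?_, Sym2.eq_swap⟩
            rw [hP, Finset.mem_filter]
            refine ⟨Finset.mem_product.2 ⟨Finset.mem_univ _, Finset.mem_univ _⟩, ?_⟩
            have := (SimpleGraph.mem_edgeSet G).1 (SimpleGraph.mem_edgeFinset.1 he)
            exact this.symm
  calc qform G (Sum.elim s t) + qform G (Sum.elim s t')
      = qform G (Sum.elim s t) + qform G (Sum.elim s t') +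
        (qform G (Sum.elim 0 t) + qform G (Sum.elim 0 t')) +
        (qform G (Sum.elim 0 t) + qform G (Sum.elim 0 t')) := by
        rw [add_assoc, F2_add_self, add_zero]
    _ = s ⬝ᵥ (GAB *ᵥ w) + (qform G (Sum.elim 0 t) + qform G (Sum.elim 0 t')) := by rw [key]


lemma hamD_eq_hamW {ι : Type*} [Fintype ι] (x y : ι → F2) : hamD x y = hamW (x + y) := by
  unfold hamD hamW
  congr 1
  apply Finset.filter_congr
  intro i _
  have : ∀ a b : F2, (a ≠ b) = (a + b ≠ 0) := by decide
  simp only [Pi.add_apply]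
  rw [this]

lemma hamD_sum_elim {k n : ℕ} (s : Fin k → F2) (t t' : Fin n → F2) :
    hamD (Sum.elim s t) (Sum.elim s t') = hamD t t' := by
  unfold hamD
  rw [Finset.card_filter, Finset.card_filter, Fintype.sum_sum_type]
  simp
  refine Finset.sum_congr rfl fun x _ => ?_
  by_cases h : t x = t' x <;> simp [h]


lemma chr_eq (c : F2) : chr c = ((chrR c : ℝ) : ℂ) := by
  simp [chr, chrR]

lemma chr_add (a b : F2) : chr (a + b) = chr a * chr b := by
  rw [chr_eq, chr_eq, chr_eq, chrR_add]; push_cast; ring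

lemma chr_mul_self (a : F2) : chr a * chr a = 1 := by
  rw [chr_eq, ← Complex.ofReal_mul, chrR_mul_self, Complex.ofReal_one]

lemma chr_dot_sum {ι : Type*} [Fintype ι] [DecidableEq ι] (w : ι → F2) :
    ∑ s : ι → F2, chr (s ⬝ᵥ w) = if w = 0 then (2 : ℂ) ^ Fintype.card ι else 0 := by
  simp_rw [chr_eq]
  rw [← Complex.ofReal_sum, chrR_dot_sum]
  split <;> simp


section CharpolyAux
open Polynomial

lemma charpoly_conj_eq {m : Type*} [Fintype m] [DecidableEq m] (P M Q : Matrix m m ℂ)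
    (h1 : P * Q = 1) (h2 : Q * P = 1) : (P * M * Q).charpoly = M.charpoly := by
  have hch : charmatrix (P * M * Q) = C.mapMatrix P * charmatrix M * C.mapMatrix Q := by
    unfold charmatrix
    rw [Matrix.mul_sub, Matrix.sub_mul, ← _root_.map_mul, ← _root_.map_mul]
    congr 1
    have hcomm : C.mapMatrix P * Matrix.scalar m (X : ℂ[X]) =
        Matrix.scalar m (X : ℂ[X]) * C.mapMatrix P :=
      (Matrix.scalar_commute (X : ℂ[X]) (fun r' => Commute.all _ _) _).symm
    rw [hcomm, Matrix.mul_assoc, ← _root_.map_mul, h1]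
    simp
  rw [Matrix.charpoly, hch, Matrix.det_mul, Matrix.det_mul, Matrix.charpoly]
  have hdet : (C.mapMatrix P).det * (C.mapMatrix Q).det = 1 := by
    rw [mul_comm, ← Matrix.det_mul, ← _root_.map_mul, h2]
    simp
  calc (C.mapMatrix P).det * (charmatrix M).det * (C.mapMatrix Q).det
      = (charmatrix M).det * ((C.mapMatrix P).det * (C.mapMatrix Q).det) := by ring
    _ = (charmatrix M).det := by rw [hdet, mul_one]

lemma charpoly_diagonal_eq {m : Type*} [Fintype m] [DecidableEq m] (d : m → ℂ) :
    (Matrix.diagonal d).charpoly = ∏ i, (X - C (d i)) := by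
  rw [Matrix.charpoly]
  have h : charmatrix (Matrix.diagonal d) = Matrix.diagonal (fun i => (X : ℂ[X]) - C (d i)) := by
    refine Matrix.ext fun i j => ?_
    by_cases h : i = j
    · subst h
      rw [charmatrix_apply_eq, Matrix.diagonal_apply_eq (fun i => (X : ℂ[X]) - C (d i)),
        Matrix.diagonal_apply_eq d]
    · rw [charmatrix_apply_ne _ _ _ h, Matrix.diagonal_apply_ne _ h, Matrix.diagonal_apply_ne _ h]
      simp
  rw [h, Matrix.det_diagonal]

lemma eig_sum_eq {m : Type*} [Fintype m] [DecidableEq m] {M : Matrix m m ℂ} (hM : M.IsHermitian)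
    (P Q : Matrix m m ℂ) (d : m → ℝ) (h1 : P * Q = 1) (h2 : Q * P = 1)
    (hMP : M = P * Matrix.diagonal (fun i => ((d i : ℝ) : ℂ)) * Q) (F : ℝ → ℝ) :
    ∑ i, F (hM.eigenvalues i) = ∑ i, F (d i) := by
  have hc1 : M.charpoly = ∏ i, (X - C ((d i : ℂ))) := by
    rw [hMP, charpoly_conj_eq _ _ _ h1 h2, charpoly_diagonal_eq]
  have hu1 : (hM.eigenvectorUnitary : Matrix m m ℂ) * star (hM.eigenvectorUnitary : Matrix m m ℂ)
      = 1 := Matrix.mem_unitaryGroup_iff.mp hM.eigenvectorUnitary.2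
  have hu2 : star (hM.eigenvectorUnitary : Matrix m m ℂ) * (hM.eigenvectorUnitary : Matrix m m ℂ)
      = 1 := Matrix.mem_unitaryGroup_iff'.mp hM.eigenvectorUnitary.2
  have hc2 : M.charpoly = ∏ i, (X - C ((hM.eigenvalues i : ℂ))) := by
    rw [congrArg Matrix.charpoly hM.spectral_theorem, Unitary.conjStarAlgAut_apply, charpoly_conj_eq _ _ _ hu1 hu2,
      charpoly_diagonal_eq]
    rfl
  have hprod : ∀ f : m → ℂ, (∏ i, (X - C (f i))) = ((univ.val.map f).map fun a => X - C a).prod := by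
    intro f
    rw [Multiset.map_map]
    rfl
  have hroots : (univ.val.map fun i => ((hM.eigenvalues i : ℂ))) =
      (univ.val.map fun i => ((d i : ℂ))) := by
    have heq := hc2.symm.trans hc1
    rw [hprod, hprod] at heq
    have := congrArg Polynomial.roots heq
    rwa [Polynomial.roots_multiset_prod_X_sub_C, Polynomial.roots_multiset_prod_X_sub_C] at this
  have hmulti : univ.val.map hM.eigenvalues = univ.val.map d := by
    apply Multiset.map_injective (Complex.ofReal_injective)
    rwa [Multiset.map_map, Multiset.map_map]
  calc ∑ i, F (hM.eigenvalues i) = ((univ.val.map hM.eigenvalues).map F).sum := by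
        rw [Multiset.map_map]; rfl
    _ = ((univ.val.map d).map F).sum := by rw [hmulti]
    _ = ∑ i, F (d i) := by rw [Multiset.map_map]; rfl

end CharpolyAux

section Main

variable {k n : ℕ} (G : SimpleGraph (Fin k ⊕ Fin n)) [DecidableRel G.Adj]
  (GAB : Matrix (Fin k) (Fin n) F2) (p : ℝ)

/-- phases on B -/
noncomputable def eps (t : Fin n → F2) : ℂ := chr (qform G (Sum.elim 0 t))

/-- the convolution kernel -/
noncomputable def fD (GAB : Matrix (Fin k) (Fin n) F2) (p : ℝ) (v : Fin n → F2) : ℂ :=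
  if GAB *ᵥ v = 0 then ((2:ℂ)^n)⁻¹ * ((2*p-1 : ℝ) : ℂ) ^ hamW v else 0

lemma ptr_entry (hGAB : ∀ u v, GAB u v = if G.Adj (Sum.inl u) (Sum.inr v) then 1 else 0)
    (t t' : Fin n → F2) :
    ptrSum k n (graphDeph G p) t t' = eps G t * eps G t' * fD GAB p (t + t') := by
  classical
  unfold ptrSum graphDeph
  simp only [Matrix.of_apply]
  have hcard : Fintype.card (Fin k ⊕ Fin n) = k + n := by simp
  have hd : ∀ s : Fin k → F2, hamD (Sum.elim s t) (Sum.elim s t') = hamW (t + t') := by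
    intro s; rw [hamD_sum_elim, hamD_eq_hamW]
  have hq : ∀ s : Fin k → F2, chr (qform G (Sum.elim s t) + qform G (Sum.elim s t')) =
      chr (s ⬝ᵥ (GAB *ᵥ (t + t'))) * (eps G t * eps G t') := by
    intro s
    rw [qform_split G GAB hGAB s t t', chr_add, chr_add]
    rfl
  calc (∑ s : Fin k → F2, ((2:ℂ) ^ Fintype.card (Fin k ⊕ Fin n))⁻¹ *
          chr (qform G (Sum.elim s t) + qform G (Sum.elim s t')) *
          ((2 * p - 1 : ℝ) : ℂ) ^ hamD (Sum.elim s t) (Sum.elim s t'))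
      = ((2:ℂ) ^ (k + n))⁻¹ * (eps G t * eps G t') * ((2 * p - 1 : ℝ) : ℂ) ^ hamW (t + t') *
          ∑ s : Fin k → F2, chr (s ⬝ᵥ (GAB *ᵥ (t + t'))) := by
        rw [Finset.mul_sum]
        refine Finset.sum_congr rfl fun s _ => ?_
        rw [hq s, hd s, hcard]
        ring
    _ = eps G t * eps G t' * fD GAB p (t + t') := by
        rw [chr_dot_sum]
        unfold fD
        split
        · rw [Fintype.card_fin]
          have h2 : (2:ℂ) ^ (k+n) = 2^k * 2^n := by rw [pow_add]
          rw [h2]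
          have hk : ((2:ℂ)^k) ≠ 0 := pow_ne_zero _ two_ne_zero
          have hn : ((2:ℂ)^n) ≠ 0 := pow_ne_zero _ two_ne_zero
          field_simp
        · simp

lemma eps_mul_self (t : Fin n → F2) : eps G t * eps G t = 1 := chr_mul_self _

lemma F2vec_add_eq_zero_iff {ι : Type*} (a b : ι → F2) : a + b = 0 ↔ a = b := by
  constructor
  · intro h
    funext i
    have h2 := congrFun h i
    have : ∀ x y : F2, x + y = 0 → x = y := by decide
    exact this _ _ h2
  · rintro rfl
    funext i
    exact F2_add_self (a i)

/-- spectrum function (real) -/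
noncomputable def gRe (GAB : Matrix (Fin k) (Fin n) F2) (p : ℝ) (u : Fin n → F2) : ℝ :=
  ((2:ℝ)^n)⁻¹ * ∑ v : Fin n → F2,
    if GAB *ᵥ v = 0 then (2*p-1)^(hamW v) * chrR (v ⬝ᵥ u) else 0

/-- phase-Hadamard matrix and its reverse -/
noncomputable def Vm : Matrix (Fin n → F2) (Fin n → F2) ℂ :=
  Matrix.of fun t u => eps G t * chr (t ⬝ᵥ u)

noncomputable def Vm' : Matrix (Fin n → F2) (Fin n → F2) ℂ :=
  Matrix.of fun u t => chr (u ⬝ᵥ t) * eps G t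

lemma fD_chr_sum (u : Fin n → F2) :
    ∑ v : Fin n → F2, fD GAB p v * chr (v ⬝ᵥ u) = ((gRe GAB p u : ℝ) : ℂ) := by
  unfold fD gRe
  push_cast
  rw [Finset.mul_sum]
  refine Finset.sum_congr rfl fun v _ => ?_
  split
  · rw [chr_eq]; push_cast; ring
  · simp

lemma Vm_mul_Vm' : Vm G * Vm' G = ((2:ℂ)^n) • (1 : Matrix (Fin n → F2) (Fin n → F2) ℂ) := by
  ext t t'
  rw [Matrix.mul_apply, Matrix.smul_apply, Matrix.one_apply]
  calc ∑ u : Fin n → F2, Vm G t u * Vm' G u t'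
      = eps G t * eps G t' * ∑ u : Fin n → F2, chr (u ⬝ᵥ (t + t')) := by
        rw [Finset.mul_sum]
        refine Finset.sum_congr rfl fun u _ => ?_
        show eps G t * chr (t ⬝ᵥ u) * (chr (u ⬝ᵥ t') * eps G t') = _
        rw [dotProduct_comm t u, dotProduct_add, chr_add]
        ring
    _ = (2:ℂ)^n • if t = t' then 1 else 0 := by
        rw [chr_dot_sum, Fintype.card_fin]
        by_cases h : t + t' = 0
        · rw [if_pos h, if_pos ((F2vec_add_eq_zero_iff t t').1 h)]
          have ht : t = t' := (F2vec_add_eq_zero_iff t t').1 h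
          subst ht
          rw [eps_mul_self]
          simp
        · rw [if_neg h, if_neg fun he => h ((F2vec_add_eq_zero_iff t t').2 he)]
          simp

lemma Vm'_mul_Vm : Vm' G * Vm G = ((2:ℂ)^n) • (1 : Matrix (Fin n → F2) (Fin n → F2) ℂ) := by
  ext u u'
  rw [Matrix.mul_apply, Matrix.smul_apply, Matrix.one_apply]
  calc ∑ t : Fin n → F2, Vm' G u t * Vm G t u'
      = ∑ t : Fin n → F2, chr (t ⬝ᵥ (u + u')) := by
        refine Finset.sum_congr rfl fun t _ => ?_
        show chr (u ⬝ᵥ t) * eps G t * (eps G t * chr (t ⬝ᵥ u')) = _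
        rw [dotProduct_comm u t, dotProduct_add, chr_add]
        calc chr (t ⬝ᵥ u) * eps G t * (eps G t * chr (t ⬝ᵥ u'))
            = chr (t ⬝ᵥ u) * chr (t ⬝ᵥ u') * (eps G t * eps G t) := by ring
          _ = chr (t ⬝ᵥ u) * chr (t ⬝ᵥ u') := by rw [eps_mul_self, mul_one]
    _ = (2:ℂ)^n • if u = u' then 1 else 0 := by
        rw [chr_dot_sum, Fintype.card_fin]
        by_cases h : u + u' = 0
        · rw [if_pos h, if_pos ((F2vec_add_eq_zero_iff u u').1 h)]
          simp
        · rw [if_neg h, if_neg fun he => h ((F2vec_add_eq_zero_iff u u').2 he)]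
          simp

lemma rhoB_mul_Vm (hGAB : ∀ u v, GAB u v = if G.Adj (Sum.inl u) (Sum.inr v) then 1 else 0) :
    ptrSum k n (graphDeph G p) * Vm G =
      Vm G * Matrix.diagonal (fun u => ((gRe GAB p u : ℝ) : ℂ)) := by
  ext t u
  rw [Matrix.mul_apply, Matrix.mul_diagonal]
  have htt : t + t = 0 := funext fun i => F2_add_self (t i)
  calc ∑ t' : Fin n → F2, ptrSum k n (graphDeph G p) t t' * Vm G t' u
      = ∑ t' : Fin n → F2, eps G t * (fD GAB p (t + t') * chr (t' ⬝ᵥ u)) := by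
        refine Finset.sum_congr rfl fun t' _ => ?_
        rw [ptr_entry G GAB p hGAB t t']
        show eps G t * eps G t' * fD GAB p (t + t') * (eps G t' * chr (t' ⬝ᵥ u)) = _
        calc eps G t * eps G t' * fD GAB p (t + t') * (eps G t' * chr (t' ⬝ᵥ u))
            = eps G t * (fD GAB p (t + t') * chr (t' ⬝ᵥ u)) * (eps G t' * eps G t') := by ring
          _ = eps G t * (fD GAB p (t + t') * chr (t' ⬝ᵥ u)) := by rw [eps_mul_self, mul_one]
    _ = eps G t * ∑ t' : Fin n → F2, fD GAB p (t + t') * chr (t' ⬝ᵥ u) := by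
        rw [Finset.mul_sum]
    _ = eps G t * ∑ v : Fin n → F2, fD GAB p v * (chr (t ⬝ᵥ u) * chr (v ⬝ᵥ u)) := by
        congr 1
        refine (Fintype.sum_equiv (Equiv.addLeft t) _ _ fun v => ?_).symm
        have he : (Equiv.addLeft t) v = t + v := rfl
        rw [he, ← add_assoc, htt, zero_add, add_dotProduct, chr_add]
    _ = eps G t * chr (t ⬝ᵥ u) * ((gRe GAB p u : ℝ) : ℂ) := by
        rw [← fD_chr_sum GAB p u, Finset.mul_sum, Finset.mul_sum]
        refine Finset.sum_congr rfl fun v _ => by ring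
    _ = Vm G t u * ((gRe GAB p u : ℝ) : ℂ) := rfl

lemma rhoB_eq (hGAB : ∀ u v, GAB u v = if G.Adj (Sum.inl u) (Sum.inr v) then 1 else 0) :
    ptrSum k n (graphDeph G p) =
      Vm G * Matrix.diagonal (fun u => ((gRe GAB p u : ℝ) : ℂ)) * (((2:ℂ)^n)⁻¹ • Vm' G) := by
  have h2n : ((2:ℂ)^n) ≠ 0 := pow_ne_zero _ two_ne_zero
  have hinv : Vm G * (((2:ℂ)^n)⁻¹ • Vm' G) = 1 := by
    rw [Matrix.mul_smul, Vm_mul_Vm', smul_smul, inv_mul_cancel₀ h2n, one_smul]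
  calc ptrSum k n (graphDeph G p)
      = ptrSum k n (graphDeph G p) * (Vm G * (((2:ℂ)^n)⁻¹ • Vm' G)) := by rw [hinv, mul_one]
    _ = (ptrSum k n (graphDeph G p) * Vm G) * (((2:ℂ)^n)⁻¹ • Vm' G) := by rw [mul_assoc]
    _ = _ := by rw [rhoB_mul_Vm G GAB p hGAB]

lemma Vm_inv_right : (((2:ℂ)^n)⁻¹ • Vm' G) * Vm G = 1 := by
  have h2n : ((2:ℂ)^n) ≠ 0 := pow_ne_zero _ two_ne_zero
  rw [Matrix.smul_mul, Vm'_mul_Vm, smul_smul, inv_mul_cancel₀ h2n, one_smul]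

lemma Vm_inv_left : Vm G * (((2:ℂ)^n)⁻¹ • Vm' G) = 1 := by
  have h2n : ((2:ℂ)^n) ≠ 0 := pow_ne_zero _ two_ne_zero
  rw [Matrix.mul_smul, Vm_mul_Vm', smul_smul, inv_mul_cancel₀ h2n, one_smul]

lemma vecMul_inj (hrank : GAB.rank = k) :
    Function.Injective (fun s : Fin k → F2 => s ᵥ* GAB) := by
  have h1 : GAB.vecMulLinear = GABᵀ.mulVecLin := (Matrix.mulVecLin_transpose GAB).symm
  have h2 : GABᵀ.rank = k := by rw [Matrix.rank_transpose]; exact hrank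
  have h3 : Module.finrank F2 (LinearMap.range GABᵀ.mulVecLin) = k := h2
  have h4 := LinearMap.finrank_range_add_finrank_ker GABᵀ.mulVecLin
  rw [h3, Module.finrank_fintype_fun_eq_card, Fintype.card_fin] at h4
  have h5 : Module.finrank F2 (LinearMap.ker GABᵀ.mulVecLin) = 0 := by omega
  have h6 : LinearMap.ker GABᵀ.mulVecLin = ⊥ := Submodule.finrank_eq_zero.mp h5
  have h7 : Function.Injective GABᵀ.mulVecLin := LinearMap.ker_eq_bot.mp h6
  rw [← h1] at h7
  exact h7

lemma w_prod (e : Fin n → F2) :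
    p ^ (n - hamW e) * (1-p) ^ hamW e = ∏ i, (if e i = 0 then p else 1-p) := by
  classical
  rw [Finset.prod_ite (f := fun _ => p) (g := fun _ => 1 - p), Finset.prod_const,
    Finset.prod_const]
  have hc : (univ.filter fun i => e i = 0).card + (univ.filter fun i => ¬ e i = 0).card = n := by
    rw [Finset.card_filter_add_card_filter_not]
    simp
  have hw : (univ.filter fun i => ¬ e i = 0).card = hamW e := rfl
  rw [hw] at hc
  have : (univ.filter fun i => e i = 0).card = n - hamW e := by omega
  rw [this, hw]

lemma w_fourier (e : Fin n → F2) :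
    p ^ (n - hamW e) * (1-p) ^ hamW e =
      ((2:ℝ)^n)⁻¹ * ∑ v : Fin n → F2, (2*p-1)^(hamW v) * chrR (v ⬝ᵥ e) := by
  classical
  have hterm : ∀ v : Fin n → F2, (2*p-1)^(hamW v) * chrR (v ⬝ᵥ e) =
      ∏ i, ((if v i = 0 then 1 else (2*p-1)) * chrR (v i * e i)) := by
    intro v
    rw [Finset.prod_mul_distrib]
    congr 1
    · rw [Finset.prod_ite (f := fun _ => (1:ℝ)) (g := fun _ => 2*p-1), Finset.prod_const,
        Finset.prod_const, one_pow, one_mul]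
      rfl
    · exact chrR_sum univ fun i => v i * e i
  calc p ^ (n - hamW e) * (1-p) ^ hamW e
      = ∏ i, (if e i = 0 then p else 1-p) := w_prod p e
    _ = ∏ i, (2:ℝ)⁻¹ * (1 + (2*p-1) * chrR (e i)) := by
        refine Finset.prod_congr rfl fun i _ => ?_
        rcases F2_cases (e i) with h | h <;> rw [h]
        · rw [if_pos rfl, chrR_zero]; ring
        · rw [if_neg (by decide), chrR_one]; ring
    _ = ((2:ℝ)^n)⁻¹ * ∏ i, (1 + (2*p-1) * chrR (e i)) := by
        rw [Finset.prod_mul_distrib, Finset.prod_const]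
        congr 1
        rw [← inv_pow]
        simp
    _ = ((2:ℝ)^n)⁻¹ * ∑ v : Fin n → F2, (2*p-1)^(hamW v) * chrR (v ⬝ᵥ e) := by
        congr 1
        have hfac : ∀ i, (1 + (2*p-1) * chrR (e i)) =
            ∑ c : F2, (if c = 0 then 1 else (2*p-1)) * chrR (c * e i) := by
          intro i
          rw [sum_F2, if_pos rfl, if_neg (by decide)]
          simp [chrR_zero]
        simp_rw [hfac]
        rw [Finset.prod_univ_sum, Fintype.piFinset_univ]
        refine Finset.sum_congr rfl fun v _ => (hterm v).symm

lemma fiber_sum (hrank : GAB.rank = k) (w : (Fin n → F2) → ℝ) (u : Fin n → F2) :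
    ∑ v ∈ (Set.toFinite {v : Fin n → F2 |
        (Submodule.Quotient.mk v : _ ⧸ LinearMap.range GAB.vecMulLinear) =
          Submodule.Quotient.mk u}).toFinset, w v =
      ∑ s : Fin k → F2, w (u + s ᵥ* GAB) := by
  classical
  refine (Finset.sum_bij (fun (a : Fin k → F2) _ => u + a ᵥ* GAB) ?_ ?_ ?_ ?_).symm
  · intro a _
    rw [Set.Finite.mem_toFinset, Set.mem_setOf_eq, Submodule.Quotient.eq]
    refine ⟨a, ?_⟩
    rw [Matrix.vecMulLinear_apply, add_sub_cancel_left]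
  · intro a _ b _ hab
    have : a ᵥ* GAB = b ᵥ* GAB := by
      have := congrArg (fun x => x - u) hab
      simpa using this
    exact vecMul_inj GAB hrank this
  · intro v hv
    rw [Set.Finite.mem_toFinset, Set.mem_setOf_eq, Submodule.Quotient.eq] at hv
    obtain ⟨a, ha⟩ := hv
    rw [Matrix.vecMulLinear_apply] at ha
    refine ⟨a, Finset.mem_univ _, ?_⟩
    show u + a ᵥ* GAB = v
    rw [ha, add_comm, sub_add_cancel]
  · intro a _
    rfl

lemma synd_formula (hrank : GAB.rank = k) (u : Fin n → F2) :
    synd (LinearMap.range GAB.vecMulLinear)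
      (fun e => p ^ (n - hamW e) * (1 - p) ^ hamW e)
      (Submodule.Quotient.mk u) = 2^k * gRe GAB p u := by
  classical
  unfold synd
  have hset : {v : Fin n → F2 | (Submodule.Quotient.mk v :
      _ ⧸ LinearMap.range GAB.vecMulLinear) = Submodule.Quotient.mk u} =
      ↑((Set.toFinite {v : Fin n → F2 | (Submodule.Quotient.mk v :
        _ ⧸ LinearMap.range GAB.vecMulLinear) = Submodule.Quotient.mk u}).toFinset) :=
    (Set.Finite.coe_toFinset _).symm
  rw [hset, finsum_mem_coe_finset, fiber_sum GAB hrank _ u]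
  calc ∑ s : Fin k → F2, (p ^ (n - hamW (u + s ᵥ* GAB)) * (1-p) ^ hamW (u + s ᵥ* GAB))
      = ∑ s : Fin k → F2, ((2:ℝ)^n)⁻¹ *
          ∑ v : Fin n → F2, (2*p-1)^(hamW v) * (chrR (v ⬝ᵥ u) * chrR (s ⬝ᵥ (GAB *ᵥ v))) := by
        refine Finset.sum_congr rfl fun s _ => ?_
        rw [w_fourier]
        congr 1
        refine Finset.sum_congr rfl fun v _ => ?_
        rw [dotProduct_add, chrR_add]
        congr 2
        rw [Matrix.dotProduct_mulVec, dotProduct_comm]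
    _ = ((2:ℝ)^n)⁻¹ * ∑ s : Fin k → F2,
          ∑ v : Fin n → F2, (2*p-1)^(hamW v) * (chrR (v ⬝ᵥ u) * chrR (s ⬝ᵥ (GAB *ᵥ v))) :=
        (Finset.mul_sum _ _ _).symm
    _ = ((2:ℝ)^n)⁻¹ * ∑ v : Fin n → F2, (2*p-1)^(hamW v) * chrR (v ⬝ᵥ u) *
          ∑ s : Fin k → F2, chrR (s ⬝ᵥ (GAB *ᵥ v)) := by
        congr 1
        rw [Finset.sum_comm]
        refine Finset.sum_congr rfl fun v _ => ?_
        rw [Finset.mul_sum]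
        refine Finset.sum_congr rfl fun s _ => ?_
        ring
    _ = ∑ v : Fin n → F2, (2:ℝ)^k *
          (((2:ℝ)^n)⁻¹ * if GAB *ᵥ v = 0 then (2*p-1)^(hamW v) * chrR (v ⬝ᵥ u) else 0) := by
        rw [Finset.mul_sum]
        refine Finset.sum_congr rfl fun v _ => ?_
        rw [chrR_dot_sum, Fintype.card_fin]
        by_cases h : GAB *ᵥ v = 0
        · rw [if_pos h, if_pos h]; ring
        · rw [if_neg h, if_neg h]; ring
    _ = 2^k * gRe GAB p u := by
        unfold gRe
        rw [Finset.mul_sum, Finset.mul_sum]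

end Main

lemma w_total (p : ℝ) {n : ℕ} : ∑ v : Fin n → F2, p ^ (n - hamW v) * (1-p) ^ hamW v = 1 := by
  classical
  have h : ∀ v : Fin n → F2, p ^ (n - hamW v) * (1-p) ^ hamW v =
      ∏ i, (if v i = 0 then p else 1-p) := fun v => w_prod p v
  simp_rw [h]
  rw [← Fintype.piFinset_univ]
  have hps := Finset.prod_univ_sum (κ := fun _ : Fin n => F2)
    (t := fun _ : Fin n => (univ : Finset F2)) (f := fun _ c => if c = 0 then p else 1 - p)
  rw [← hps]
  have : ∀ i : Fin n, (∑ c : F2, if c = 0 then p else 1-p) = 1 := by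
    intro i
    rw [sum_F2, if_pos rfl, if_neg (by decide)]
    ring
  rw [Finset.prod_congr rfl fun i _ => this i, Finset.prod_const, one_pow]

section Quot

variable {k n : ℕ} (GAB : Matrix (Fin k) (Fin n) F2)

lemma synd_total [Fintype ((Fin n → F2) ⧸ LinearMap.range GAB.vecMulLinear)] (p : ℝ) :
    ∑ c : (Fin n → F2) ⧸ LinearMap.range GAB.vecMulLinear,
      synd (LinearMap.range GAB.vecMulLinear)
        (fun e => p ^ (n - hamW e) * (1 - p) ^ hamW e) c = 1 := by
  classical
  have hc : ∀ c : (Fin n → F2) ⧸ LinearMap.range GAB.vecMulLinear,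
      synd (LinearMap.range GAB.vecMulLinear)
        (fun e => p ^ (n - hamW e) * (1 - p) ^ hamW e) c =
      ∑ v ∈ univ.filter (fun v : Fin n → F2 =>
          (Submodule.Quotient.mk v : _ ⧸ LinearMap.range GAB.vecMulLinear) = c),
        p ^ (n - hamW v) * (1 - p) ^ hamW v := by
    intro c
    unfold synd
    have hset : {v : Fin n → F2 | (Submodule.Quotient.mk v :
        _ ⧸ LinearMap.range GAB.vecMulLinear) = c} =
        ↑(univ.filter (fun v : Fin n → F2 =>
          (Submodule.Quotient.mk v : _ ⧸ LinearMap.range GAB.vecMulLinear) = c)) := by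
      ext v
      simp
    rw [hset, finsum_mem_coe_finset]
  rw [Finset.sum_congr rfl fun c _ => hc c,
    Finset.sum_fiberwise univ (fun v : Fin n → F2 =>
      (Submodule.Quotient.mk v : _ ⧸ LinearMap.range GAB.vecMulLinear))
      (fun v => p ^ (n - hamW v) * (1 - p) ^ hamW v)]
  exact w_total p

lemma sum_comp_mk [Fintype ((Fin n → F2) ⧸ LinearMap.range GAB.vecMulLinear)]
    (hrank : GAB.rank = k)
    (H : ((Fin n → F2) ⧸ LinearMap.range GAB.vecMulLinear) → ℝ) :
    ∑ t : Fin n → F2, H (Submodule.Quotient.mk t) =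
      ∑ c : (Fin n → F2) ⧸ LinearMap.range GAB.vecMulLinear, 2^k * H c := by
  classical
  rw [← Finset.sum_fiberwise univ (fun v : Fin n → F2 =>
      (Submodule.Quotient.mk v : _ ⧸ LinearMap.range GAB.vecMulLinear))
      (fun v => H (Submodule.Quotient.mk v))]
  refine Finset.sum_congr rfl fun c _ => ?_
  obtain ⟨u, rfl⟩ := Submodule.Quotient.mk_surjective _ c
  have hfs : univ.filter (fun v : Fin n → F2 =>
      (Submodule.Quotient.mk v : _ ⧸ LinearMap.range GAB.vecMulLinear) =
        Submodule.Quotient.mk u) =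
      (Set.toFinite {v : Fin n → F2 |
        (Submodule.Quotient.mk v : _ ⧸ LinearMap.range GAB.vecMulLinear) =
          Submodule.Quotient.mk u}).toFinset := by
    ext v
    simp [Set.Finite.mem_toFinset]
  rw [hfs, fiber_sum GAB hrank _ u]
  have hmk : ∀ s : Fin k → F2,
      (Submodule.Quotient.mk (u + s ᵥ* GAB) : _ ⧸ LinearMap.range GAB.vecMulLinear) =
        Submodule.Quotient.mk u := by
    intro s
    rw [Submodule.Quotient.eq]
    exact ⟨s, by rw [Matrix.vecMulLinear_apply, add_sub_cancel_left]⟩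
  rw [Finset.sum_congr rfl fun s _ => by rw [hmk s]]
  rw [Finset.sum_const, Finset.card_univ]
  have hcard : Fintype.card (Fin k → F2) = 2^k := by
    rw [Fintype.card_fun]
    simp
  rw [hcard, nsmul_eq_mul]
  push_cast
  ring

end Quot

/-- The entropy of Bob's reduced state of a dephased graph state: `Ŝ(ρ_B) = k + S(q)`,
where `q` is the syndrome distribution of the row space of the biadjacency matrix `G_AB`
(which has rank `k`) with weights `p^{n-wt(e)}(1-p)^{wt(e)}`. -/
theorem entropy_marginal_dephased_graph_state (k n : ℕ)
    (G : SimpleGraph (Fin k ⊕ Fin n)) [DecidableRel G.Adj]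
    (GAB : Matrix (Fin k) (Fin n) F2)
    (hGAB : ∀ u v, GAB u v = if G.Adj (Sum.inl u) (Sum.inr v) then 1 else 0)
    (hrank : GAB.rank = k)
    (p : ℝ) (hp : p ∈ Set.Icc (0 : ℝ) 1)
    (hBherm : (ptrSum k n (graphDeph G p)).IsHermitian) :
    vnEnt hBherm =
      k + shannonEnt (synd (LinearMap.range GAB.vecMulLinear)
            (fun e => p ^ (n - hamW e) * (1 - p) ^ hamW e)) := by
  classical
  letI : Fintype ((Fin n → F2) ⧸ LinearMap.range GAB.vecMulLinear) := Fintype.ofFinite _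
  set K := LinearMap.range GAB.vecMulLinear with hK
  set w : (Fin n → F2) → ℝ := fun e => p ^ (n - hamW e) * (1 - p) ^ hamW e with hw
  have h2k : ((2:ℝ)^k) ≠ 0 := pow_ne_zero _ two_ne_zero
  have heig : ∀ F : ℝ → ℝ, (∑ t, F (hBherm.eigenvalues t)) = ∑ t, F (gRe GAB p t) :=
    fun F => eig_sum_eq hBherm (Vm G) (((2:ℂ)^n)⁻¹ • Vm' G) (gRe GAB p)
      (Vm_inv_left G) (Vm_inv_right G) (rhoB_eq G GAB p hGAB) F
  have hgre : ∀ t, gRe GAB p t = ((2:ℝ)^k)⁻¹ * synd K w (Submodule.Quotient.mk t) := by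
    intro t
    rw [hK, hw, synd_formula GAB p hrank t, ← mul_assoc, inv_mul_cancel₀ h2k, one_mul]
  have hsum1 : (∑ c, synd K w c) = 1 := synd_total GAB p
  have hvn : vnEnt hBherm = -∑ t : Fin n → F2, gRe GAB p t * Real.logb 2 (gRe GAB p t) := by
    unfold vnEnt
    rw [heig (fun x => x * Real.logb 2 x)]
  have hsh : shannonEnt (synd K w) = -∑ c, synd K w c * Real.logb 2 (synd K w c) := by
    unfold shannonEnt
    rw [finsum_eq_sum_of_fintype]
  have hHm : (∑ t : Fin n → F2, gRe GAB p t * Real.logb 2 (gRe GAB p t))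
      = ∑ c, 2^k * (((2:ℝ)^k)⁻¹ * synd K w c *
          Real.logb 2 (((2:ℝ)^k)⁻¹ * synd K w c)) := by
    rw [Finset.sum_congr rfl fun t (_ : t ∈ univ) => by rw [hgre t]]
    exact sum_comp_mk GAB hrank
      (fun c => ((2:ℝ)^k)⁻¹ * synd K w c * Real.logb 2 (((2:ℝ)^k)⁻¹ * synd K w c))
  have hcan : (2:ℝ)^k * ((2:ℝ)^k)⁻¹ = 1 := mul_inv_cancel₀ h2k
  have hperc : ∀ c, 2^k * (((2:ℝ)^k)⁻¹ * synd K w c *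
        Real.logb 2 (((2:ℝ)^k)⁻¹ * synd K w c))
      = synd K w c * Real.logb 2 (synd K w c) - (k:ℝ) * synd K w c := by
    intro c
    by_cases h0 : synd K w c = 0
    · rw [h0]
      simp
    · have h2ki : ((2:ℝ)^k)⁻¹ ≠ 0 := inv_ne_zero h2k
      rw [Real.logb_mul h2ki h0, Real.logb_inv, Real.logb_pow,
        Real.logb_self_eq_one (by norm_num)]
      linear_combination (synd K w c * (Real.logb 2 (synd K w c) - (k:ℝ))) * hcan
  rw [hvn, hsh, hHm, Finset.sum_congr rfl fun c (_ : c ∈ univ) => hperc c,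
    Finset.sum_sub_distrib, ← Finset.mul_sum, hsum1]
  ring
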